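/- For any chunk x in an IEUTxO model T, the concrete positions pos(x) (atoms labelling inputs and outputs in x) coincide with the abstract positions posi(x) computed in the monoid of chunks F(T) obtained by adjoining a failure element ⊤ to the chunks of T. -/

import Mathlib

/-- An (idealised E)UTxO transaction: a finite set of inputs (position, key),
a finite set of outputs (position, data, validator), not both empty.
Positions (atoms) are modelled by natural numbers. -/
structure Tx (α β V : Type) where
  inputs : Set (ℕ × α)
  outputs : Set (ℕ × β × V)
  fin_inputs : inputs.Finite
  fin_outputs : outputs.Finite
  nontrivial : inputs.Nonempty ∨ outputs.Nonempty

/-- `val v d tx i` : validator `v`, carrying state data `d`, validates the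
pointed transaction `tx @ i` (a transaction `tx` with distinguished input `i`). -/
def IsChunk {α β V : Type} (val : V → β → Tx α β V → (ℕ × α) → Prop)
    (txs : List (Tx α β V)) : Prop :=
  (∀ m n (hm : m < txs.length) (hn : n < txs.length),
      ∀ o ∈ (txs.get ⟨m, hm⟩).outputs, ∀ o' ∈ (txs.get ⟨n, hn⟩).outputs,
        o.1 = o'.1 → m = n ∧ o = o') ∧
  (∀ m n (hm : m < txs.length) (hn : n < txs.length),
      ∀ i ∈ (txs.get ⟨m, hm⟩).inputs, ∀ i' ∈ (txs.get ⟨n, hn⟩).inputs,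
        i.1 = i'.1 → m = n ∧ i = i') ∧
  (∀ m n (hm : m < txs.length) (hn : n < txs.length),
      ∀ i ∈ (txs.get ⟨m, hm⟩).inputs, ∀ o ∈ (txs.get ⟨n, hn⟩).outputs,
        i.1 = o.1 → n < m ∧ val o.2.2 o.2.1 (txs.get ⟨m, hm⟩) i)

/-- Input positions of a transaction. -/
def inputPos {α β V : Type} (tx : Tx α β V) : Set ℕ := {a | ∃ i ∈ tx.inputs, i.1 = a}

/-- Output positions of a transaction. -/
def outputPos {α β V : Type} (tx : Tx α β V) : Set ℕ := {a | ∃ o ∈ tx.outputs, o.1 = a}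

/-- Positions of a transaction. -/
def posTx {α β V : Type} (tx : Tx α β V) : Set ℕ := inputPos tx ∪ outputPos tx

/-- Positions of a list of transactions. -/
def posList {α β V : Type} (txs : List (Tx α β V)) : Set ℕ :=
  {a | ∃ tx ∈ txs, a ∈ posTx tx}

/-- Unspent transaction inputs: positions of inputs not pointing to an earlier output. -/
def utxi {α β V : Type} (txs : List (Tx α β V)) : Set ℕ :=
  {a | ∃ m, ∃ hm : m < txs.length, ∃ i ∈ (txs.get ⟨m, hm⟩).inputs, i.1 = a ∧
        ∀ n, ∀ hn : n < txs.length, n < m →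
          ∀ o ∈ (txs.get ⟨n, hn⟩).outputs, o.1 ≠ a}

/-- Unspent transaction outputs: positions of outputs not pointed to by a later input. -/
def utxo {α β V : Type} (txs : List (Tx α β V)) : Set ℕ :=
  {a | ∃ n, ∃ hn : n < txs.length, ∃ o ∈ (txs.get ⟨n, hn⟩).outputs, o.1 = a ∧
        ∀ m, ∀ hm : m < txs.length, n < m →
          ∀ i ∈ (txs.get ⟨m, hm⟩).inputs, i.1 ≠ a}

/-- Spent transaction channels: positions of outputs pointed to by a later input. -/
def stx {α β V : Type} (txs : List (Tx α β V)) : Set ℕ :=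
  {a | ∃ n, ∃ hn : n < txs.length, ∃ o ∈ (txs.get ⟨n, hn⟩).outputs, o.1 = a ∧
        ∃ m, ∃ hm : m < txs.length, n < m ∧
          ∃ i ∈ (txs.get ⟨m, hm⟩).inputs, i.1 = a}

/-- Chunks `x` and `x'` commute: `x ++ x'` and `x' ++ x` have the same validity
behaviour in every context. -/
def Commuting {α β V : Type} (val : V → β → Tx α β V → (ℕ × α) → Prop)
    (x x' : List (Tx α β V)) : Prop :=
  ∀ z : List (Tx α β V),
    (IsChunk val ((x ++ x') ++ z) ↔ IsChunk val ((x' ++ x) ++ z)) ∧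
    (IsChunk val (z ++ (x ++ x')) ↔ IsChunk val (z ++ (x' ++ x)))

variable {α β V : Type}

/-- Action of an atoms-permutation on a transaction: rename all positions. -/
def permTx (π : Equiv.Perm ℕ) (tx : Tx α β V) : Tx α β V where
  inputs := (fun i : ℕ × α => (π i.1, i.2)) '' tx.inputs
  outputs := (fun o : ℕ × β × V => (π o.1, o.2)) '' tx.outputs
  fin_inputs := tx.fin_inputs.image _
  fin_outputs := tx.fin_outputs.image _
  nontrivial := tx.nontrivial.imp (fun h => h.image _) (fun h => h.image _)

/-- Action of an atoms-permutation on a list of transactions. -/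
def permList (π : Equiv.Perm ℕ) (txs : List (Tx α β V)) : List (Tx α β V) :=
  txs.map (permTx π)

/-- The abstract positions of a chunk `x`, computed in the monoid of chunks
`F(T)` (chunks plus a failure element, composition being validated concatenation,
defaulting to failure): those atoms `a` such that for every permutation `π`
fixing `a`, neither `(π·x) ++ x` nor `x ++ (π·x)` is a chunk. -/
def posiF (val : V → β → Tx α β V → (ℕ × α) → Prop)
    (x : List (Tx α β V)) : Set ℕ :=
  {a | ∀ π : Equiv.Perm ℕ, π a = a →
        ¬ IsChunk val (permList π x ++ x) ∧ ¬ IsChunk val (x ++ permList π x)}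


section AuxProof

variable {α β V : Type}

/-- `a` occurs as an input position at some index of `y`. -/
def InAt (y : List (Tx α β V)) (a : ℕ) : Prop :=
  ∃ m, ∃ hm : m < y.length, ∃ i ∈ (y.get ⟨m, hm⟩).inputs, i.1 = a

/-- `a` occurs as an output position at some index of `y`. -/
def OutAt (y : List (Tx α β V)) (a : ℕ) : Prop :=
  ∃ m, ∃ hm : m < y.length, ∃ o ∈ (y.get ⟨m, hm⟩).outputs, o.1 = a

lemma mem_posList_iff {x : List (Tx α β V)} {a : ℕ} :
    a ∈ posList x ↔ InAt x a ∨ OutAt x a := by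
  constructor
  · rintro ⟨tx, htx, hp⟩
    obtain ⟨⟨m, hm⟩, rfl⟩ := List.mem_iff_get.mp htx
    rcases hp with ⟨i, hi, hia⟩ | ⟨o, ho, hoa⟩
    · exact Or.inl ⟨m, hm, i, hi, hia⟩
    · exact Or.inr ⟨m, hm, o, ho, hoa⟩
  · rintro (⟨m, hm, i, hi, hia⟩ | ⟨m, hm, o, ho, hoa⟩)
    · exact ⟨x.get ⟨m, hm⟩, List.get_mem _ _, Or.inl ⟨i, hi, hia⟩⟩
    · exact ⟨x.get ⟨m, hm⟩, List.get_mem _ _, Or.inr ⟨o, ho, hoa⟩⟩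

lemma not_isChunk_of_inAt {val : V → β → Tx α β V → (ℕ × α) → Prop}
    {y z : List (Tx α β V)} {a : ℕ} (h1 : InAt y a) (h2 : InAt z a) :
    ¬ IsChunk val (y ++ z) := by
  rintro ⟨_, hc2, _⟩
  obtain ⟨m, hm, i, hi, hia⟩ := h1
  obtain ⟨n, hn, i', hi', hia'⟩ := h2
  have hm' : m < (y ++ z).length := by rw [List.length_append]; omega
  have hn' : y.length + n < (y ++ z).length := by rw [List.length_append]; omega
  have e1 : (y ++ z).get ⟨m, hm'⟩ = y.get ⟨m, hm⟩ := by
    simp [List.getElem_append_left hm]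
  have e2 : (y ++ z).get ⟨y.length + n, hn'⟩ = z.get ⟨n, hn⟩ := by
    simp only [List.get_eq_getElem, List.getElem_append_right (by omega : y.length ≤ y.length + n)]
    congr 1
    omega
  have := (hc2 m (y.length + n) hm' hn' i (e1 ▸ hi) i' (e2 ▸ hi') (by rw [hia, hia'])).1
  omega

lemma not_isChunk_of_outAt {val : V → β → Tx α β V → (ℕ × α) → Prop}
    {y z : List (Tx α β V)} {a : ℕ} (h1 : OutAt y a) (h2 : OutAt z a) :
    ¬ IsChunk val (y ++ z) := by
  rintro ⟨hc1, _, _⟩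
  obtain ⟨m, hm, o, ho, hoa⟩ := h1
  obtain ⟨n, hn, o', ho', hoa'⟩ := h2
  have hm' : m < (y ++ z).length := by rw [List.length_append]; omega
  have hn' : y.length + n < (y ++ z).length := by rw [List.length_append]; omega
  have e1 : (y ++ z).get ⟨m, hm'⟩ = y.get ⟨m, hm⟩ := by
    simp [List.getElem_append_left hm]
  have e2 : (y ++ z).get ⟨y.length + n, hn'⟩ = z.get ⟨n, hn⟩ := by
    simp only [List.get_eq_getElem, List.getElem_append_right (by omega : y.length ≤ y.length + n)]
    congr 1
    omega
  have := (hc1 m (y.length + n) hm' hn' o (e1 ▸ ho) o' (e2 ▸ ho') (by rw [hoa, hoa'])).1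
  omega

lemma permList_get (π : Equiv.Perm ℕ) (x : List (Tx α β V)) (m : ℕ)
    (hm : m < (permList π x).length) :
    (permList π x).get ⟨m, hm⟩
      = permTx π (x.get ⟨m, by simpa [permList] using hm⟩) := by
  simp [permList]

lemma isChunk_permList {val : V → β → Tx α β V → (ℕ × α) → Prop}
    (hval : ∀ (π : Equiv.Perm ℕ) (v : V) (d : β) (tx : Tx α β V) (i : ℕ × α),
        val v d (permTx π tx) (π i.1, i.2) ↔ val v d tx i)
    (π : Equiv.Perm ℕ) {x : List (Tx α β V)} (hx : IsChunk val x) :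
    IsChunk val (permList π x) := by
  obtain ⟨h1, h2, h3⟩ := hx
  refine ⟨?_, ?_, ?_⟩
  · intro m n hm hn o ho o' ho' he
    rw [permList_get] at ho ho'
    obtain ⟨p, hp, rfl⟩ := ho
    obtain ⟨p', hp', rfl⟩ := ho'
    obtain ⟨hmn, hpe⟩ := h1 m n _ _ p hp p' hp' (π.injective he)
    exact ⟨hmn, by rw [hpe]⟩
  · intro m n hm hn i hi i' hi' he
    rw [permList_get] at hi hi'
    obtain ⟨p, hp, rfl⟩ := hi
    obtain ⟨p', hp', rfl⟩ := hi'
    obtain ⟨hmn, hpe⟩ := h2 m n _ _ p hp p' hp' (π.injective he)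
    exact ⟨hmn, by rw [hpe]⟩
  · intro m n hm hn i hi o ho he
    rw [permList_get] at hi ho
    obtain ⟨p, hp, rfl⟩ := hi
    obtain ⟨q, hq, rfl⟩ := ho
    obtain ⟨hnm, hv⟩ := h3 m n _ _ p hp q hq (π.injective he)
    refine ⟨hnm, ?_⟩
    rw [permList_get]
    exact (hval π _ _ _ p).mpr hv

lemma posTx_permTx (π : Equiv.Perm ℕ) (tx : Tx α β V) :
    posTx (permTx π tx) = π '' posTx tx := by
  ext a
  simp only [posTx, inputPos, outputPos, permTx, Set.mem_union, Set.mem_image,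
    Set.mem_setOf_eq]
  constructor
  · rintro (⟨i, ⟨p, hp, rfl⟩, rfl⟩ | ⟨o, ⟨q, hq, rfl⟩, rfl⟩)
    · exact ⟨p.1, Or.inl ⟨p, hp, rfl⟩, rfl⟩
    · exact ⟨q.1, Or.inr ⟨q, hq, rfl⟩, rfl⟩
  · rintro ⟨b, (⟨p, hp, rfl⟩ | ⟨q, hq, rfl⟩), rfl⟩
    · exact Or.inl ⟨(π p.1, p.2), ⟨p, hp, rfl⟩, rfl⟩
    · exact Or.inr ⟨(π q.1, q.2), ⟨q, hq, rfl⟩, rfl⟩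

lemma posList_permList (π : Equiv.Perm ℕ) (x : List (Tx α β V)) :
    posList (permList π x) = π '' posList x := by
  ext a
  simp only [posList, permList, Set.mem_setOf_eq, List.mem_map, Set.mem_image]
  constructor
  · rintro ⟨_, ⟨tx, htx, rfl⟩, ha⟩
    rw [posTx_permTx] at ha
    obtain ⟨b, hb, rfl⟩ := ha
    exact ⟨b, ⟨tx, htx, hb⟩, rfl⟩
  · rintro ⟨b, ⟨tx, htx, hb⟩, rfl⟩
    exact ⟨permTx π tx, ⟨tx, htx, rfl⟩, (posTx_permTx π tx) ▸ ⟨b, hb, rfl⟩⟩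

lemma posTx_finite (tx : Tx α β V) : (posTx tx).Finite := by
  have h1 : inputPos tx = Prod.fst '' tx.inputs := by
    ext a; simp [inputPos, Set.mem_image]
  have h2 : outputPos tx = Prod.fst '' tx.outputs := by
    ext a; simp [outputPos, Set.mem_image]
  rw [posTx, h1, h2]
  exact (tx.fin_inputs.image _).union (tx.fin_outputs.image _)

lemma posList_finite (x : List (Tx α β V)) : (posList x).Finite := by
  induction x with
  | nil =>
      convert Set.finite_empty
      ext a; simp [posList]
  | cons tx l ih =>
      have h : posList (tx :: l) = posTx tx ∪ posList l := by
        ext a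
        simp only [posList, List.mem_cons, Set.mem_union, Set.mem_setOf_eq]
        constructor
        · rintro ⟨t, (rfl | ht), hp⟩
          · exact Or.inl hp
          · exact Or.inr ⟨t, ht, hp⟩
        · rintro (hp | ⟨t, ht, hp⟩)
          · exact ⟨tx, Or.inl rfl, hp⟩
          · exact ⟨t, Or.inr ht, hp⟩
      rw [h]
      exact (posTx_finite tx).union ih

lemma exists_fresh_perm (S : Set ℕ) (hS : S.Finite) (a : ℕ) (ha : a ∉ S) :
    ∃ π : Equiv.Perm ℕ, π a = a ∧ ∀ s ∈ S, π s ∉ S := by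
  classical
  obtain ⟨N, haN, hN⟩ : ∃ N, a < N ∧ ∀ s ∈ S, s < N := by
    obtain ⟨N0, hN0⟩ := hS.bddAbove
    refine ⟨max a N0 + 1, by omega, fun s hs => ?_⟩
    have := hN0 hs
    omega
  set f : ℕ → ℕ := fun n => if n ∈ S then n + N else
    if N ≤ n ∧ n - N ∈ S then n - N else n with hf
  have hfS : ∀ n ∈ S, f n = n + N := by
    intro n hn; simp [hf, hn]
  have hinv : Function.Involutive f := by
    intro n
    by_cases h1 : n ∈ S
    · have hn : n < N := hN n h1
      rw [hfS n h1]
      have hns : n + N ∉ S := fun h => by have := hN _ h; omega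
      have hc : N ≤ n + N ∧ n + N - N ∈ S := ⟨by omega, by simpa using h1⟩
      simp only [hf, if_neg hns, if_pos hc]
      omega
    · by_cases h2 : N ≤ n ∧ n - N ∈ S
      · have : f n = n - N := by simp only [hf, if_neg h1, if_pos h2]
        rw [this, hfS _ h2.2]
        omega
      · have : f n = n := by simp only [hf, if_neg h1, if_neg h2]
        rw [this, this]
  refine ⟨hinv.toPerm f, ?_, ?_⟩
  · show f a = a
    have hc : ¬ (N ≤ a ∧ a - N ∈ S) := fun h => by omega
    simp only [hf, if_neg ha, if_neg hc]
  · intro s hs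
    show f s ∉ S
    rw [hfS s hs]
    intro h
    have := hN _ h
    omega

lemma isChunk_append_of_disjoint {val : V → β → Tx α β V → (ℕ × α) → Prop}
    {y z : List (Tx α β V)} (hy : IsChunk val y) (hz : IsChunk val z)
    (hd : ∀ a ∈ posList y, a ∉ posList z) : IsChunk val (y ++ z) := by
  obtain ⟨hy1, hy2, hy3⟩ := hy
  obtain ⟨hz1, hz2, hz3⟩ := hz
  have hgetl : ∀ m (hm : m < y.length) (hm' : m < (y ++ z).length),
      (y ++ z).get ⟨m, hm'⟩ = y.get ⟨m, hm⟩ := by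
    intro m hm hm'
    simp [List.getElem_append_left hm]
  have hgetr : ∀ m (hm' : m < (y ++ z).length) (hm : y.length ≤ m),
      (y ++ z).get ⟨m, hm'⟩ = z.get ⟨m - y.length, by
        have := @List.length_append _ y z ▸ hm'; omega⟩ := by
    intro m hm' hm
    simp [List.getElem_append_right hm]
  refine ⟨?_, ?_, ?_⟩
  · intro m n hm hn o ho o' ho' he
    rcases lt_or_ge m y.length with h | h <;> rcases lt_or_ge n y.length with h' | h'
    · rw [hgetl m h hm] at ho; rw [hgetl n h' hn] at ho'
      exact hy1 m n h h' o ho o' ho' he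
    · exfalso
      rw [hgetl m h hm] at ho
      rw [hgetr n hn h'] at ho'
      exact hd o.1 (mem_posList_iff.mpr (Or.inr ⟨m, h, o, ho, rfl⟩))
        (mem_posList_iff.mpr (Or.inr ⟨n - y.length, _, o', ho', he.symm⟩))
    · exfalso
      rw [hgetr m hm h] at ho
      rw [hgetl n h' hn] at ho'
      exact hd o'.1 (mem_posList_iff.mpr (Or.inr ⟨n, h', o', ho', rfl⟩))
        (mem_posList_iff.mpr (Or.inr ⟨m - y.length, _, o, ho, he⟩))
    · rw [hgetr m hm h] at ho
      rw [hgetr n hn h'] at ho'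
      obtain ⟨hmn, hoe⟩ := hz1 _ _ _ _ o ho o' ho' he
      exact ⟨by omega, hoe⟩
  · intro m n hm hn i hi i' hi' he
    rcases lt_or_ge m y.length with h | h <;> rcases lt_or_ge n y.length with h' | h'
    · rw [hgetl m h hm] at hi; rw [hgetl n h' hn] at hi'
      exact hy2 m n h h' i hi i' hi' he
    · exfalso
      rw [hgetl m h hm] at hi
      rw [hgetr n hn h'] at hi'
      exact hd i.1 (mem_posList_iff.mpr (Or.inl ⟨m, h, i, hi, rfl⟩))
        (mem_posList_iff.mpr (Or.inl ⟨n - y.length, _, i', hi', he.symm⟩))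
    · exfalso
      rw [hgetr m hm h] at hi
      rw [hgetl n h' hn] at hi'
      exact hd i'.1 (mem_posList_iff.mpr (Or.inl ⟨n, h', i', hi', rfl⟩))
        (mem_posList_iff.mpr (Or.inl ⟨m - y.length, _, i, hi, he⟩))
    · rw [hgetr m hm h] at hi
      rw [hgetr n hn h'] at hi'
      obtain ⟨hmn, hie⟩ := hz2 _ _ _ _ i hi i' hi' he
      exact ⟨by omega, hie⟩
  · intro m n hm hn i hi o ho he
    rcases lt_or_ge m y.length with h | h <;> rcases lt_or_ge n y.length with h' | h'
    · rw [hgetl m h hm] at hi; rw [hgetl n h' hn] at ho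
      obtain ⟨hnm, hv⟩ := hy3 m n h h' i hi o ho he
      refine ⟨hnm, ?_⟩
      rw [hgetl m h hm]
      exact hv
    · exfalso
      rw [hgetl m h hm] at hi
      rw [hgetr n hn h'] at ho
      exact hd i.1 (mem_posList_iff.mpr (Or.inl ⟨m, h, i, hi, rfl⟩))
        (mem_posList_iff.mpr (Or.inr ⟨n - y.length, _, o, ho, he.symm⟩))
    · exfalso
      rw [hgetr m hm h] at hi
      rw [hgetl n h' hn] at ho
      exact hd o.1 (mem_posList_iff.mpr (Or.inr ⟨n, h', o, ho, rfl⟩))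
        (mem_posList_iff.mpr (Or.inl ⟨m - y.length, _, i, hi, he⟩))
    · rw [hgetr m hm h] at hi
      rw [hgetr n hn h'] at ho
      obtain ⟨hnm, hv⟩ := hz3 _ _ _ _ i hi o ho he
      refine ⟨by omega, ?_⟩
      rw [hgetr m hm h]
      exact hv

end AuxProof

/-- **Statement 19.** For any chunk `x` of an (equivariant) IEUTxO model, the
concrete positions `pos x` coincide with the abstract positions `posi x`
computed in the monoid of chunks `F(T)`. -/
theorem pos_eq_posi (val : V → β → Tx α β V → (ℕ × α) → Prop)
    (hval : ∀ (π : Equiv.Perm ℕ) (v : V) (d : β) (tx : Tx α β V) (i : ℕ × α),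
        val v d (permTx π tx) (π i.1, i.2) ↔ val v d tx i)
    (x : List (Tx α β V)) (hx : IsChunk val x) :
    posList x = posiF val x := by
  ext a
  simp only [posiF, Set.mem_setOf_eq]
  constructor
  · intro ha π hπ
    rcases mem_posList_iff.mp ha with ⟨m, hm, i, hi, hia⟩ | ⟨m, hm, o, ho, hoa⟩
    · obtain ⟨b, s⟩ := i
      simp only at hia
      subst hia
      have hlenp : m < (permList π x).length := by simpa [permList] using hm
      have hip : (b, s) ∈ ((permList π x).get ⟨m, hlenp⟩).inputs := by
        rw [permList_get]
        exact ⟨(b, s), by simpa [permList] using hi, by simp [hπ]⟩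
      have hIx : InAt x b := ⟨m, hm, (b, s), hi, rfl⟩
      have hIp : InAt (permList π x) b := ⟨m, hlenp, (b, s), hip, rfl⟩
      exact ⟨not_isChunk_of_inAt hIp hIx, not_isChunk_of_inAt hIx hIp⟩
    · obtain ⟨b, dv⟩ := o
      simp only at hoa
      subst hoa
      have hlenp : m < (permList π x).length := by simpa [permList] using hm
      have hop : (b, dv) ∈ ((permList π x).get ⟨m, hlenp⟩).outputs := by
        rw [permList_get]
        exact ⟨(b, dv), by simpa [permList] using ho, by simp [hπ]⟩
      have hOx : OutAt x b := ⟨m, hm, (b, dv), ho, rfl⟩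
      have hOp : OutAt (permList π x) b := ⟨m, hlenp, (b, dv), hop, rfl⟩
      exact ⟨not_isChunk_of_outAt hOp hOx, not_isChunk_of_outAt hOx hOp⟩
  · intro ha
    by_contra hna
    obtain ⟨π, hπa, hπS⟩ := exists_fresh_perm (posList x) (posList_finite x) a hna
    have hpx : IsChunk val (permList π x) := isChunk_permList hval π hx
    have hd : ∀ b ∈ posList (permList π x), b ∉ posList x := by
      intro b hb
      rw [posList_permList] at hb
      obtain ⟨s, hs, rfl⟩ := hb
      exact hπS s hs
    exact (ha π hπa).1 (isChunk_append_of_disjoint hpx hx hd)
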